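/- Let T be a complete first-order theory, A ⊆ B ⊆ C sets of parameters with C contained in a model of T, let p and q be complete types over C, and let r be a set of formulas with parameters in A in the variables of p and q jointly, such that p ∪ r is satisfiable and p ∪ r entails q. Then (p↾B) ∪ r entails q↾B, where p↾B denotes the restriction of p to formulas with parameters in B. -/

import Mathlib

open FirstOrder FirstOrder.Language

universe u v w u' v'

namespace StmtAux
open FirstOrder.Language.BoundedFormula

section RelabelComp
open FirstOrder.Language.BoundedFormula
variable {L : FirstOrder.Language.{u, v}} {α β γ : Type*}



theorem myrelabelAux (f : α → β) (g : β → γ) (n : ℕ) :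
    relabelAux (Sum.inl ∘ g) (0 + n) ∘ relabelAux (Sum.inl ∘ f) n =
      Sum.map id (Fin.castLE (by omega : 0 + n ≤ 0 + (0 + n))) ∘
        relabelAux (Sum.inl ∘ (g ∘ f)) n := by
  funext x
  rcases x with a | i
  · simp [relabelAux]
  · simp only [relabelAux, Function.comp_apply, Sum.map_inr, Equiv.sumAssoc_apply_inr,
      Sum.map_inl, Sum.map_map]
    simp [relabelAux]
    apply Fin.ext
    simp

theorem myrelabel_relabel {k} (φ : L.BoundedFormula α k) (f : α → β) (g : β → γ) :
    (φ.relabel (Sum.inl ∘ f)).relabel (Sum.inl ∘ g) =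
      (φ.relabel (Sum.inl ∘ (g ∘ f))).castLE (by omega : 0 + k ≤ 0 + (0 + k)) := by
  induction φ with
  | falsum => rfl
  | equal t₁ t₂ =>
    simp only [relabel, mapTermRel, castLE, Term.relabel_relabel, myrelabelAux]
  | rel R ts =>
    simp only [relabel, mapTermRel, castLE, Term.relabel_relabel, id_eq]
    congr 1
    funext i
    simp only [Function.comp_apply, Term.relabel_relabel]
    congr 1
    exact myrelabelAux f g _
  | imp φ₁ φ₂ ih1 ih2 => simp only [relabel_imp, castLE, ih1, ih2]
  | all φ ih => simp only [relabel_all, castLE, ih, castLE_castLE]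

theorem Formula_relabel_relabel (f : α → β) (g : β → γ) (φ : L.Formula α) :
    (φ.relabel f).relabel g = φ.relabel (g ∘ f) := by
  have := myrelabel_relabel (k := 0) φ f g
  simpa [Formula.relabel, castLE_rfl] using this

end RelabelComp

variable {L : FirstOrder.Language.{u, v}} {α β P : Type*}

/-- Conjunction over a finset. -/
noncomputable def myiInf {ι : Type*} (s : Finset ι) (f : ι → L.Formula P) : L.Formula P :=
  BoundedFormula.iInf (fun i : s => f i)

theorem myrealize_iInf {M : Type*} [L.Structure M] {ι : Type*} {s : Finset ι}
    {f : ι → L.Formula P} {v : P → M} :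
    Formula.Realize (myiInf s f) v ↔ ∀ b ∈ s, (f b).Realize v :=
  (BoundedFormula.realize_iInf (f := fun i : s => f i)).trans
    ⟨fun h b hb => h ⟨b, hb⟩, fun h b => h b.1 b.2⟩

section
variable [DecidableEq ((α ⊕ β) ⊕ P)] (θ₀ : L.Formula ((α ⊕ β) ⊕ P))

/-- The used `β`-variables of a formula. -/
def betaGamma : Type _ :=
  {b : β // Sum.inl (Sum.inr b) ∈ (↑θ₀.freeVarFinset : Set ((α ⊕ β) ⊕ P))}

instance : Finite (betaGamma θ₀) :=
  Finite.of_injective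
    (fun b => (⟨Sum.inl (Sum.inr b.1), b.2⟩ :
      {x // x ∈ (↑θ₀.freeVarFinset : Set ((α ⊕ β) ⊕ P))}))
    (fun b c h => by
      apply Subtype.ext
      have := congrArg Subtype.val h
      simpa using this)

/-- The relabeling map for `allsBeta`. -/
def betaMap : {x // x ∈ (↑θ₀.freeVarFinset : Set ((α ⊕ β) ⊕ P))} → (α ⊕ P) ⊕ betaGamma θ₀ :=
  fun d =>
    match d with
    | ⟨Sum.inl (Sum.inl a), _⟩ => Sum.inl (Sum.inl a)
    | ⟨Sum.inl (Sum.inr b), h⟩ => Sum.inr ⟨b, h⟩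
    | ⟨Sum.inr x, _⟩ => Sum.inl (Sum.inr x)

/-- Universally quantify away the (finitely many used) `β`-variables of a formula. -/
noncomputable def allsBeta : L.Formula (α ⊕ P) :=
  Formula.iAlls (betaGamma θ₀)
    (Formula.relabel (betaMap θ₀) (θ₀.restrictFreeVar (Set.inclusion (Set.Subset.refl _))))

theorem Formula_relabel_not (g : α → β) (φ : L.Formula α) :
    (φ.not).relabel g = (φ.relabel g).not :=
  BoundedFormula.relabel_not _ _

theorem realize_allsBeta {M : Type*} [L.Structure M]
    (w' : β → M) (u : (α ⊕ P) → M) :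
    (allsBeta θ₀).Realize u ↔
      ∀ w2 : β → M, θ₀.Realize (Sum.elim (Sum.elim (u ∘ Sum.inl) w2) (u ∘ Sum.inr)) := by
  rw [allsBeta, Formula.realize_iAlls]
  simp only [Formula.realize_relabel, Function.comp_def]
  constructor
  · intro h w2
    have h2 := h (fun b => w2 b.1)
    have e : (fun d => Sum.elim u (fun b : betaGamma θ₀ => w2 b.1) (betaMap θ₀ d)) =
        (Sum.elim (Sum.elim (u ∘ Sum.inl) w2) (u ∘ Sum.inr)) ∘ (↑) := by
      funext d
      rcases d with ⟨(a | b) | x, hd⟩ <;> rfl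
    rw [e] at h2
    exact (BoundedFormula.realize_restrictFreeVar' (Set.Subset.refl _)).1 h2
  · intro h i
    have h2 := h (fun b =>
      if hb : Sum.inl (Sum.inr b) ∈ (↑θ₀.freeVarFinset : Set ((α ⊕ β) ⊕ P)) then i ⟨b, hb⟩
      else w' b)
    have h3 := (BoundedFormula.realize_restrictFreeVar' (Set.Subset.refl _)).2 h2
    have e : (fun d => Sum.elim u i (betaMap θ₀ d)) =
        (Sum.elim (Sum.elim (u ∘ Sum.inl) (fun b =>
          if hb : Sum.inl (Sum.inr b) ∈ (↑θ₀.freeVarFinset : Set ((α ⊕ β) ⊕ P)) then i ⟨b, hb⟩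
          else w' b)) (u ∘ Sum.inr)) ∘ (↑) := by
      funext d
      rcases d with ⟨(a | b) | x, hd⟩
      · rfl
      · simp only [betaMap, Function.comp_apply, Sum.elim_inl, Sum.elim_inr, dif_pos hd]; rfl
      · rfl
    rw [e]
    exact h3

end

section Key
variable {L : FirstOrder.Language.{u, v}} {U : Type w} [L.Structure U]
  {α : Type u'} {β : Type v'}

theorem keyCompactness
    (A : Set U)
    (p : Set (L.Formula (α ⊕ U))) (q : Set (L.Formula (β ⊕ U)))
    (r : Set (L.Formula ((α ⊕ β) ⊕ U)))
    (hrA : ∀ φ ∈ r, ∃ ψ : L.Formula ((α ⊕ β) ⊕ A), φ = ψ.relabel (Sum.map id Subtype.val))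
    (hent : ∀ (N : Type (max u v w u' v')) [L.Structure N] (f : U ↪ₑ[L] N)
      (v : α → N) (w : β → N),
      (∀ φ ∈ p, φ.Realize (Sum.elim v ⇑f)) →
      (∀ φ ∈ r, φ.Realize (Sum.elim (Sum.elim v w) ⇑f)) →
      ∀ φ ∈ q, φ.Realize (Sum.elim w ⇑f))
    (φq : L.Formula (β ⊕ U)) (hφq : φq ∈ q) :
    ∃ r₀ : Finset (L.Formula ((α ⊕ β) ⊕ A)),
      (∀ ρ ∈ r₀, ρ.relabel (Sum.map id Subtype.val) ∈ r) ∧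
      ∀ (M : Type (max u v w u' v')) [L.Structure M] [Nonempty M] (g : U ↪ₑ[L] M)
        (v' : α → M) (w' : β → M),
        (∀ χ ∈ p, χ.Realize (Sum.elim v' ⇑g)) →
        (∀ ρ ∈ r₀,
          (ρ.relabel (Sum.map id Subtype.val)).Realize (Sum.elim (Sum.elim v' w') ⇑g)) →
        φq.Realize (Sum.elim w' ⇑g) := by
  classical
  let S : L.Formula ((α ⊕ β) ⊕ U) → (L[[(α ⊕ β) ⊕ U]]).Sentence := Formula.equivSentence
  let D : (L[[(α ⊕ β) ⊕ U]]).Theory :=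
    (fun χ : L.Formula U => S (χ.relabel Sum.inr)) '' {χ | χ.Realize (id : U → U)}
  let P : (L[[(α ⊕ β) ⊕ U]]).Theory :=
    (fun χ : L.Formula (α ⊕ U) => S (χ.relabel (Sum.map Sum.inl id))) '' p
  let Rs : (L[[(α ⊕ β) ⊕ U]]).Theory := S '' r
  let Φ : (L[[(α ⊕ β) ⊕ U]]).Sentence := S (φq.relabel (Sum.map Sum.inr id))
  have hunsat : ¬ (D ∪ P ∪ Rs ∪ {Φ.not}).IsSatisfiable := by
    rintro ⟨M0⟩
    letI : L.Structure M0 := (L.lhomWithConstants ((α ⊕ β) ⊕ U)).reduct M0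
    haveI : (L.lhomWithConstants ((α ⊕ β) ⊕ U)).IsExpansionOn M0 :=
      LHom.isExpansionOn_reduct (L.lhomWithConstants ((α ⊕ β) ⊕ U)) M0
    have hD : ∀ χ : L.Formula U, χ.Realize (id : U → U) →
        χ.Realize (fun u => ((L.con (Sum.inr u) : (L[[(α ⊕ β) ⊕ U]]).Constants) : M0)) := by
      intro χ hχ
      have hmem : S (χ.relabel Sum.inr) ∈ D ∪ P ∪ Rs ∪ {Φ.not} :=
        Or.inl (Or.inl (Or.inl ⟨χ, hχ, rfl⟩))
      have h1 := Theory.realize_sentence_of_mem (D ∪ P ∪ Rs ∪ {Φ.not}) hmem (M := M0)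
      rw [show S (χ.relabel Sum.inr) = Formula.equivSentence (χ.relabel Sum.inr) from rfl,
        Formula.realize_equivSentence, Formula.realize_relabel] at h1
      exact h1
    let g : U ↪ₑ[L] M0 :=
      ⟨fun u => ((L.con (Sum.inr u) : (L[[(α ⊕ β) ⊕ U]]).Constants) : M0), by
        intro n χ x
        constructor
        · intro hx
          by_contra hnx
          have h2 := hD ((χ.not).relabel x)
            (by rw [Formula.realize_relabel]; simpa using hnx)
          rw [Formula.realize_relabel, Formula.realize_not] at h2
          exact h2 hx
        · intro hx
          have h2 := hD (χ.relabel x) (by rw [Formula.realize_relabel]; simpa using hx)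
          rw [Formula.realize_relabel] at h2
          exact h2⟩
    have hg : ⇑g = fun u => ((L.con (Sum.inr u) : (L[[(α ⊕ β) ⊕ U]]).Constants) : M0) := rfl
    let vM : α → M0 := fun a =>
      ((L.con (Sum.inl (Sum.inl a)) : (L[[(α ⊕ β) ⊕ U]]).Constants) : M0)
    let wM : β → M0 := fun b =>
      ((L.con (Sum.inl (Sum.inr b)) : (L[[(α ⊕ β) ⊕ U]]).Constants) : M0)
    have hpM : ∀ χ ∈ p, χ.Realize (Sum.elim vM ⇑g) := by
      intro χ hχ
      have hmem : S (χ.relabel (Sum.map Sum.inl id)) ∈ D ∪ P ∪ Rs ∪ {Φ.not} :=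
        Or.inl (Or.inl (Or.inr ⟨χ, hχ, rfl⟩))
      have h1 := Theory.realize_sentence_of_mem (D ∪ P ∪ Rs ∪ {Φ.not}) hmem (M := M0)
      rw [show S (χ.relabel (Sum.map Sum.inl id)) =
          Formula.equivSentence (χ.relabel (Sum.map Sum.inl id)) from rfl,
        Formula.realize_equivSentence, Formula.realize_relabel] at h1
      have e : ((fun a : (α ⊕ β) ⊕ U =>
          ((L.con a : (L[[(α ⊕ β) ⊕ U]]).Constants) : M0)) ∘ Sum.map Sum.inl id) =
          Sum.elim vM ⇑g := by
        funext x
        rcases x with a | u <;> rfl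
      rw [e] at h1
      exact h1
    have hrM : ∀ χ ∈ r, χ.Realize (Sum.elim (Sum.elim vM wM) ⇑g) := by
      intro χ hχ
      have hmem : S χ ∈ D ∪ P ∪ Rs ∪ {Φ.not} := Or.inl (Or.inr ⟨χ, hχ, rfl⟩)
      have h1 := Theory.realize_sentence_of_mem (D ∪ P ∪ Rs ∪ {Φ.not}) hmem (M := M0)
      rw [show S χ = Formula.equivSentence χ from rfl, Formula.realize_equivSentence] at h1
      have e : (fun a : (α ⊕ β) ⊕ U =>
          ((L.con a : (L[[(α ⊕ β) ⊕ U]]).Constants) : M0)) = Sum.elim (Sum.elim vM wM) ⇑g := by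
        funext x
        rcases x with (a | b) | u <;> rfl
      rw [e] at h1
      exact h1
    have hΦn : ¬ φq.Realize (Sum.elim wM ⇑g) := by
      have hmem : Φ.not ∈ D ∪ P ∪ Rs ∪ {Φ.not} := Or.inr rfl
      have h1 := Theory.realize_sentence_of_mem (D ∪ P ∪ Rs ∪ {Φ.not}) hmem (M := M0)
      rw [Sentence.realize_not] at h1
      intro hc
      apply h1
      show Sentence.Realize M0 (Formula.equivSentence (φq.relabel (Sum.map Sum.inr id)))
      rw [Formula.realize_equivSentence, Formula.realize_relabel]
      have e : ((fun a : (α ⊕ β) ⊕ U =>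
          ((L.con a : (L[[(α ⊕ β) ⊕ U]]).Constants) : M0)) ∘ Sum.map Sum.inr id) =
          Sum.elim wM ⇑g := by
        funext x
        rcases x with b | u <;> rfl
      rw [e]
      exact hc
    exact hΦn (hent M0 g vM wM hpM hrM φq hφq)
  rw [Theory.isSatisfiable_iff_isFinitelySatisfiable, Theory.IsFinitelySatisfiable] at hunsat
  push_neg at hunsat
  obtain ⟨s0, hssub, hsnot⟩ := hunsat
  let pred : (L[[(α ⊕ β) ⊕ U]]).Sentence → Prop := fun σ =>
    ∃ ψA : L.Formula ((α ⊕ β) ⊕ A), ψA.relabel (Sum.map id Subtype.val) ∈ r ∧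
      S (ψA.relabel (Sum.map id Subtype.val)) = σ
  let c : (L[[(α ⊕ β) ⊕ U]]).Sentence → L.Formula ((α ⊕ β) ⊕ A) := fun σ =>
    if h : pred σ then h.choose else ⊥
  refine ⟨(s0.filter pred).image c, ?_, ?_⟩
  · intro ρ hρ
    obtain ⟨σ, hσ, rfl⟩ := Finset.mem_image.1 hρ
    have hp : pred σ := (Finset.mem_filter.1 hσ).2
    simp only [c, dif_pos hp]
    exact hp.choose_spec.1
  · intro M iM iNE g v' w' hp hr
    by_contra hφ
    letI : (constantsOn ((α ⊕ β) ⊕ U)).Structure M :=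
      constantsOn.structure (Sum.elim (Sum.elim v' w') ⇑g)
    have hcon : ∀ k : (α ⊕ β) ⊕ U,
        ((L.con k : (L[[(α ⊕ β) ⊕ U]]).Constants) : M) = Sum.elim (Sum.elim v' w') (⇑g) k :=
      fun k => rfl
    have hmodel : M ⊨ (↑s0 : (L[[(α ⊕ β) ⊕ U]]).Theory) := by
      rw [Theory.model_iff]
      intro σ hσ
      rcases hssub hσ with ((hσD | hσP) | hσR) | hσΦ
      · obtain ⟨χ, hχ, rfl⟩ := hσD
        show Sentence.Realize M (Formula.equivSentence (χ.relabel Sum.inr))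
        rw [Formula.realize_equivSentence, Formula.realize_relabel]
        have e : ((fun a : (α ⊕ β) ⊕ U =>
            ((L.con a : (L[[(α ⊕ β) ⊕ U]]).Constants) : M)) ∘ Sum.inr) = ⇑g := by
          funext u
          exact hcon (Sum.inr u)
        rw [e]
        have h2 := g.map_formula χ (id : U → U)
        rw [Function.comp_id] at h2
        exact h2.2 hχ
      · obtain ⟨χ, hχ, rfl⟩ := hσP
        show Sentence.Realize M (Formula.equivSentence (χ.relabel (Sum.map Sum.inl id)))
        rw [Formula.realize_equivSentence, Formula.realize_relabel]
        have e : ((fun a : (α ⊕ β) ⊕ U =>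
            ((L.con a : (L[[(α ⊕ β) ⊕ U]]).Constants) : M)) ∘ Sum.map Sum.inl id) =
            Sum.elim v' ⇑g := by
          funext x
          rcases x with a | u <;> rfl
        rw [e]
        exact hp χ hχ
      · obtain ⟨ρ, hρ, rfl⟩ := hσR
        obtain ⟨ψA, rfl⟩ := hrA ρ hρ
        have hpred : pred (S (ψA.relabel (Sum.map id Subtype.val))) := ⟨ψA, hρ, rfl⟩
        have hc := hpred.choose_spec
        have h1 := hr (c (S (ψA.relabel (Sum.map id Subtype.val))))
          (Finset.mem_image.2 ⟨_, Finset.mem_filter.2 ⟨hσ, hpred⟩, rfl⟩)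
        rw [show c (S (ψA.relabel (Sum.map id Subtype.val))) = hpred.choose from dif_pos hpred]
          at h1
        rw [← hc.2]
        show Sentence.Realize M
          (Formula.equivSentence (hpred.choose.relabel (Sum.map id Subtype.val)))
        rw [Formula.realize_equivSentence]
        have e : (fun a : (α ⊕ β) ⊕ U =>
            ((L.con a : (L[[(α ⊕ β) ⊕ U]]).Constants) : M)) =
            Sum.elim (Sum.elim v' w') ⇑g := by
          funext x
          exact hcon x
        rw [e]
        exact h1
      · rw [Set.mem_singleton_iff] at hσΦ
        subst hσΦ
        rw [Sentence.realize_not]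
        intro hc
        apply hφ
        have hc2 : Sentence.Realize M
            (Formula.equivSentence (φq.relabel (Sum.map Sum.inr id))) := hc
        rw [Formula.realize_equivSentence, Formula.realize_relabel] at hc2
        have e : ((fun a : (α ⊕ β) ⊕ U =>
            ((L.con a : (L[[(α ⊕ β) ⊕ U]]).Constants) : M)) ∘ Sum.map Sum.inr id) =
            Sum.elim w' ⇑g := by
          funext x
          rcases x with b | u <;> rfl
        rw [e] at hc2
        exact hc2
    haveI := hmodel
    exact hsnot (Theory.Model.isSatisfiable M)

end Key
end StmtAux

open StmtAux

/-- Let `A ⊆ B ⊆ C` be subsets of a model `U`, `p` and `q` complete types over `C`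
(in variables `α` and `β`), and `r` a set of formulas with parameters in `A` in
the joint variables, such that `p ∪ r` is satisfiable (in an elementary extension
of `U`) and `p ∪ r` entails `q`. Then `(p↾B) ∪ r` entails `q↾B`, where the
restriction to `B` consists of the formulas whose parameters lie in `B`. -/
theorem stmt_10 {L : FirstOrder.Language.{u, v}} (T : L.Theory) (hT : T.IsComplete)
    {U : Type w} [L.Structure U] [U ⊨ T]
    (A B C : Set U) (hAB : A ⊆ B) (hBC : B ⊆ C)
    {α : Type u'} {β : Type v'}
    (p : Set (L.Formula (α ⊕ U))) (q : Set (L.Formula (β ⊕ U)))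
    (r : Set (L.Formula ((α ⊕ β) ⊕ U)))
    -- `p` and `q` have parameters in `C`
    (hpC : ∀ φ ∈ p, ∃ ψ : L.Formula (α ⊕ C), φ = ψ.relabel (Sum.map id Subtype.val))
    (hqC : ∀ φ ∈ q, ∃ ψ : L.Formula (β ⊕ C), φ = ψ.relabel (Sum.map id Subtype.val))
    -- `r` has parameters in `A`
    (hrA : ∀ φ ∈ r, ∃ ψ : L.Formula ((α ⊕ β) ⊕ A),
      φ = ψ.relabel (Sum.map id Subtype.val))
    -- `p` and `q` are complete over `C`
    (hpcomp : ∀ ψ : L.Formula (α ⊕ C),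
      ψ.relabel (Sum.map id Subtype.val) ∈ p ∨ ψ.not.relabel (Sum.map id Subtype.val) ∈ p)
    (hqcomp : ∀ ψ : L.Formula (β ⊕ C),
      ψ.relabel (Sum.map id Subtype.val) ∈ q ∨ ψ.not.relabel (Sum.map id Subtype.val) ∈ q)
    -- `p ∪ r` is satisfiable in an elementary extension of `U`
    (hsat : ∃ (N : Type (max u v w u' v')) (_ : L.Structure N) (f : U ↪ₑ[L] N)
      (v : α → N) (w : β → N),
      (∀ φ ∈ p, φ.Realize (Sum.elim v ⇑f)) ∧
      (∀ φ ∈ r, φ.Realize (Sum.elim (Sum.elim v w) ⇑f)))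
    -- `p ∪ r` entails `q`
    (hent : ∀ (N : Type (max u v w u' v')) [L.Structure N] (f : U ↪ₑ[L] N)
      (v : α → N) (w : β → N),
      (∀ φ ∈ p, φ.Realize (Sum.elim v ⇑f)) →
      (∀ φ ∈ r, φ.Realize (Sum.elim (Sum.elim v w) ⇑f)) →
      ∀ φ ∈ q, φ.Realize (Sum.elim w ⇑f)) :
    -- conclusion: `(p↾B) ∪ r` entails `q↾B`
    ∀ (N : Type (max u v w u' v')) [L.Structure N] (f : U ↪ₑ[L] N)
      (v : α → N) (w : β → N),
      (∀ φ ∈ p, (∃ ψ : L.Formula (α ⊕ B), φ = ψ.relabel (Sum.map id Subtype.val)) →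
        φ.Realize (Sum.elim v ⇑f)) →
      (∀ φ ∈ r, φ.Realize (Sum.elim (Sum.elim v w) ⇑f)) →
      ∀ φ ∈ q, (∃ ψ : L.Formula (β ⊕ B), φ = ψ.relabel (Sum.map id Subtype.val)) →
        φ.Realize (Sum.elim w ⇑f) := by
  classical
  intro N iN f v w hpB hrN φq hφq hφB
  obtain ⟨ψB, hψB⟩ := hφB
  obtain ⟨N₀, s₀, f₀, v₀, w₀, hp0, hr0⟩ := hsat
  by_cases hne : Nonempty α ∨ Nonempty β ∨ Nonempty U
  · -- main case
    haveI hNne : Nonempty N := by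
      rcases hne with ha | hb | hu
      exacts [⟨v ha.some⟩, ⟨w hb.some⟩, ⟨f hu.some⟩]
    haveI hN0ne : Nonempty N₀ := by
      rcases hne with ha | hb | hu
      exacts [⟨v₀ ha.some⟩, ⟨w₀ hb.some⟩, ⟨f₀ hu.some⟩]
    obtain ⟨r₀, hr₀mem, hsem⟩ := keyCompactness A p q r hrA hent φq hφq
    set conj : L.Formula ((α ⊕ β) ⊕ ↥B) :=
      myiInf r₀ (fun ρ => ρ.relabel (Sum.map id (Set.inclusion hAB))) with hconj
    set θ₀ : L.Formula ((α ⊕ β) ⊕ ↥B) := conj.imp (ψB.relabel (Sum.map Sum.inr id)) with hθ₀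
    set θB : L.Formula (α ⊕ ↥B) := allsBeta θ₀ with hθB
    set θC : L.Formula (α ⊕ ↥C) := θB.relabel (Sum.map id (Set.inclusion hBC)) with hθC
    set θU : L.Formula (α ⊕ U) := θB.relabel (Sum.map id Subtype.val) with hθU
    -- claim 1 : θU is realized in every model of p
    have claim1 : ∀ (M : Type (max u v w u' v')) [iM2 : L.Structure M] [Nonempty M]
        (g : U ↪ₑ[L] M) (v' : α → M) (w'' : β → M),
        (∀ χ ∈ p, χ.Realize (Sum.elim v' ⇑g)) → θU.Realize (Sum.elim v' ⇑g) := by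
      intro M iM2 iNe g v' w'' hp
      rw [hθU, Formula.realize_relabel]
      have e0 : (Sum.elim v' ⇑g ∘ Sum.map id (Subtype.val : ↥B → U))
          = Sum.elim v' (⇑g ∘ (Subtype.val : ↥B → U)) := by
        funext x; rcases x with a | b <;> rfl
      rw [e0, hθB, realize_allsBeta θ₀ w'']
      intro w2
      rw [hθ₀, Formula.realize_imp]
      intro hconjr
      rw [hconj] at hconjr
      rw [myrealize_iInf] at hconjr
      have hrsem : ∀ ρ ∈ r₀,
          (ρ.relabel (Sum.map id Subtype.val)).Realize (Sum.elim (Sum.elim v' w2) ⇑g) := by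
        intro ρ hρ
        have h1 := hconjr ρ hρ
        rw [Formula.realize_relabel] at h1 ⊢
        have e1 : (Sum.elim (Sum.elim ((Sum.elim v' (⇑g ∘ (Subtype.val : ↥B → U))) ∘ Sum.inl) w2)
              ((Sum.elim v' (⇑g ∘ (Subtype.val : ↥B → U))) ∘ Sum.inr) ∘
              Sum.map id (Set.inclusion hAB))
            = (Sum.elim (Sum.elim v' w2) ⇑g ∘ Sum.map id (Subtype.val : ↥A → U)) := by
          funext x; rcases x with (a | b) | c <;> rfl
        rw [e1] at h1
        exact h1
      have hφr := hsem M g v' w2 hp hrsem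
      rw [Formula.realize_relabel]
      rw [hψB, Formula.realize_relabel] at hφr
      have e2 : (Sum.elim w2 ⇑g ∘ Sum.map id (Subtype.val : ↥B → U))
          = (Sum.elim (Sum.elim ((Sum.elim v' (⇑g ∘ (Subtype.val : ↥B → U))) ∘ Sum.inl) w2)
              ((Sum.elim v' (⇑g ∘ (Subtype.val : ↥B → U))) ∘ Sum.inr) ∘
              Sum.map Sum.inr id) := by
        funext x; rcases x with b | c <;> rfl
      rw [e2] at hφr
      exact hφr
    -- claim 2 : θU ∈ p
    have hcomp : θC.relabel (Sum.map id Subtype.val) = θU := by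
      rw [hθC, hθU, Formula_relabel_relabel]
      congr 1
      funext x
      rcases x with a | b <;> rfl
    have claim2 : θU ∈ p := by
      rcases hpcomp θC with hmem | hmem
      · rw [hcomp] at hmem
        exact hmem
      · exfalso
        rw [Formula_relabel_not, hcomp] at hmem
        have hreal := hp0 θU.not hmem
        rw [Formula.realize_not] at hreal
        exact hreal (claim1 N₀ f₀ v₀ w₀ hp0)
    -- conclusion
    have hθreal := hpB θU claim2 ⟨θB, hθU⟩
    rw [hθU, Formula.realize_relabel] at hθreal
    have e0 : (Sum.elim v ⇑f ∘ Sum.map id (Subtype.val : ↥B → U))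
        = Sum.elim v (⇑f ∘ (Subtype.val : ↥B → U)) := by
      funext x; rcases x with a | b <;> rfl
    rw [e0, hθB, realize_allsBeta θ₀ w] at hθreal
    have h2 := hθreal w
    rw [hθ₀, Formula.realize_imp] at h2
    have hconjreal : conj.Realize (Sum.elim (Sum.elim ((Sum.elim v (⇑f ∘ (Subtype.val : ↥B → U)))
        ∘ Sum.inl) w) ((Sum.elim v (⇑f ∘ (Subtype.val : ↥B → U))) ∘ Sum.inr)) := by
      rw [hconj, myrealize_iInf]
      intro ρ hρ
      have h3 := hrN (ρ.relabel (Sum.map id Subtype.val)) (hr₀mem ρ hρ)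
      rw [Formula.realize_relabel] at h3 ⊢
      have e1 : (Sum.elim (Sum.elim v w) ⇑f ∘ Sum.map id (Subtype.val : ↥A → U))
          = (Sum.elim (Sum.elim ((Sum.elim v (⇑f ∘ (Subtype.val : ↥B → U))) ∘ Sum.inl) w)
              ((Sum.elim v (⇑f ∘ (Subtype.val : ↥B → U))) ∘ Sum.inr) ∘
              Sum.map id (Set.inclusion hAB)) := by
        funext x; rcases x with (a | b) | c <;> rfl
      rw [e1] at h3
      exact h3
    have h4 := h2 hconjreal
    rw [Formula.realize_relabel] at h4
    rw [hψB, Formula.realize_relabel]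
    have e2 : (Sum.elim (Sum.elim ((Sum.elim v (⇑f ∘ (Subtype.val : ↥B → U))) ∘ Sum.inl) w)
          ((Sum.elim v (⇑f ∘ (Subtype.val : ↥B → U))) ∘ Sum.inr) ∘ Sum.map Sum.inr id)
        = (Sum.elim w ⇑f ∘ Sum.map id (Subtype.val : ↥B → U)) := by
      funext x; rcases x with b | c <;> rfl
    rw [e2] at h4
    exact h4
  · -- degenerate case : α, β, U all empty
    push_neg at hne
    obtain ⟨hnα, hnβ, hnU⟩ := hne
    haveI : IsEmpty α := hnα
    haveI : IsEmpty β := hnβ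
    haveI : IsEmpty U := hnU
    have hq0 := hent N₀ f₀ v₀ w₀ hp0 hr0 φq hφq
    set σ : L.Sentence := φq.relabel (fun x : β ⊕ U => (isEmptyElim x : Empty)) with hσ
    have key : ∀ (M : Type (max u v w u' v')) [iM : L.Structure M] (vv : (β ⊕ U) → M),
        φq.Realize vv ↔ M ⊨ σ := by
      intro M iM vv
      have h := Formula.realize_relabel (φ := φq)
        (g := fun x : β ⊕ U => (isEmptyElim x : Empty)) (v := (default : Empty → M))
      have e : ((default : Empty → M) ∘ (fun x : β ⊕ U => (isEmptyElim x : Empty))) = vv := by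
        funext x; exact isEmptyElim x
      rw [e] at h
      exact h.symm
    rw [key N (Sum.elim w ⇑f)]
    rw [key N₀ (Sum.elim w₀ ⇑f₀)] at hq0
    exact (f.map_sentence σ).1 ((f₀.map_sentence σ).2 hq0)
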